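/- Let G be a group, A a finite generating set, and L an automatic (or more generally, any) language over A with π(L) = G consisting of λ-quasigeodesic words for some λ. If H ≤ G is a quasiconvex subset of Γ(G,A) (for a δ-hyperbolic Cayley graph), then H is L-quasiconvex: there is K > 0 such that for every w ∈ L with π(w) ∈ H and every prefix p of w, some word u of length at most K has π(pu) ∈ H. -/

import Mathlib

def evalWord {A G : Type} [Group G] (a : A → G) (w : List A) : G :=
  (w.map a).prod

noncomputable def wlen {A G : Type} [Group G] (a : A → G) (g : G) : ℕ :=
  sInf {n | ∃ w : List A, evalWord a w = g ∧ w.length = n}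

noncomputable def wdist {A G : Type} [Group G] (a : A → G) (g h : G) : ℕ :=
  wlen a (g⁻¹ * h)

def FourPointHyperbolic {A G : Type} [Group G] (a : A → G) (δ : ℝ) : Prop :=
  ∀ x y z w : G, (wdist a x y : ℝ) + wdist a z w ≤
    max ((wdist a x z : ℝ) + wdist a y w) ((wdist a x w : ℝ) + wdist a y z) + 2 * δ

namespace LQCAux
variable {A G : Type} [Group G]

theorem evalWord_nil (a : A → G) : evalWord a ([] : List A) = 1 := rfl

theorem evalWord_append (a : A → G) (u v : List A) :
    evalWord a (u ++ v) = evalWord a u * evalWord a v := by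
  simp [evalWord]

theorem evalWord_take_drop (a : A → G) (w : List A) (i : ℕ) :
    evalWord a w = evalWord a (w.take i) * evalWord a (w.drop i) := by
  rw [← evalWord_append, List.take_append_drop]

theorem wlen_le (a : A → G) {w : List A} {g : G} (h : evalWord a w = g) :
    wlen a g ≤ w.length := Nat.sInf_le ⟨w, h, rfl⟩

theorem wlen_spec (a : A → G) (hgen : ∀ g : G, ∃ w : List A, evalWord a w = g) (g : G) :
    ∃ w : List A, evalWord a w = g ∧ w.length = wlen a g := by
  obtain ⟨w, hw⟩ := hgen g
  exact Nat.sInf_mem (⟨w.length, w, hw, rfl⟩ :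
    Set.Nonempty {n | ∃ w : List A, evalWord a w = g ∧ w.length = n})

theorem wlen_one (a : A → G) : wlen a (1 : G) = 0 :=
  Nat.le_zero.mp (wlen_le a (evalWord_nil a))

theorem wdist_eq (a : A → G) (g h : G) : wdist a g h = wlen a (g⁻¹ * h) := rfl

theorem wdist_self (a : A → G) (g : G) : wdist a g g = 0 := by
  rw [wdist_eq, inv_mul_cancel, wlen_one]

theorem wdist_one_left (a : A → G) (g : G) : wdist a 1 g = wlen a g := by
  rw [wdist_eq, inv_one, one_mul]

theorem wdist_mul_left (a : A → G) (g x y : G) : wdist a (g * x) (g * y) = wdist a x y := by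
  rw [wdist_eq, wdist_eq]; congr 1; group

noncomputable def ilet (a : A → G) (hinv : ∀ x : A, ∃ y : A, a y = (a x)⁻¹) (x : A) : A :=
  (hinv x).choose

theorem ilet_spec (a : A → G) (hinv : ∀ x : A, ∃ y : A, a y = (a x)⁻¹) (x : A) :
    a (ilet a hinv x) = (a x)⁻¹ := (hinv x).choose_spec

noncomputable def invWord (a : A → G) (hinv : ∀ x : A, ∃ y : A, a y = (a x)⁻¹)
    (w : List A) : List A := (w.reverse).map (ilet a hinv)

theorem invWord_length (a : A → G) (hinv : ∀ x : A, ∃ y : A, a y = (a x)⁻¹) (w : List A) :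
    (invWord a hinv w).length = w.length := by simp [invWord]

theorem invWord_append (a : A → G) (hinv : ∀ x : A, ∃ y : A, a y = (a x)⁻¹) (u v : List A) :
    invWord a hinv (u ++ v) = invWord a hinv v ++ invWord a hinv u := by
  simp [invWord]

theorem evalWord_invWord (a : A → G) (hinv : ∀ x : A, ∃ y : A, a y = (a x)⁻¹) (w : List A) :
    evalWord a (invWord a hinv w) = (evalWord a w)⁻¹ := by
  induction w with
  | nil => simp [invWord, evalWord]
  | cons x t ih =>
    have h1 : (x :: t) = [x] ++ t := rfl
    rw [h1, invWord_append, evalWord_append, evalWord_append, ih]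
    have : evalWord a (invWord a hinv [x]) = (evalWord a [x])⁻¹ := by
      simp [invWord, evalWord, ilet_spec]
    rw [this, ← mul_inv_rev]

theorem wlen_inv_le (a : A → G) (hinv : ∀ x : A, ∃ y : A, a y = (a x)⁻¹)
    (hgen : ∀ g : G, ∃ w : List A, evalWord a w = g) (g : G) :
    wlen a g⁻¹ ≤ wlen a g := by
  obtain ⟨w, hw, hl⟩ := wlen_spec a hgen g
  calc wlen a g⁻¹ ≤ (invWord a hinv w).length :=
        wlen_le a (by rw [evalWord_invWord, hw])
    _ = w.length := invWord_length a hinv w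
    _ = wlen a g := hl

theorem wlen_inv (a : A → G) (hinv : ∀ x : A, ∃ y : A, a y = (a x)⁻¹)
    (hgen : ∀ g : G, ∃ w : List A, evalWord a w = g) (g : G) :
    wlen a g⁻¹ = wlen a g :=
  le_antisymm (wlen_inv_le a hinv hgen g)
    (by simpa using wlen_inv_le a hinv hgen g⁻¹)

theorem wdist_comm (a : A → G) (hinv : ∀ x : A, ∃ y : A, a y = (a x)⁻¹)
    (hgen : ∀ g : G, ∃ w : List A, evalWord a w = g) (g h : G) :
    wdist a g h = wdist a h g := by
  rw [wdist_eq, wdist_eq, ← wlen_inv a hinv hgen (g⁻¹ * h), mul_inv_rev, inv_inv]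

theorem wlen_mul_le (a : A → G) (hgen : ∀ g : G, ∃ w : List A, evalWord a w = g) (g h : G) :
    wlen a (g * h) ≤ wlen a g + wlen a h := by
  obtain ⟨u, hu, hul⟩ := wlen_spec a hgen g
  obtain ⟨v, hv, hvl⟩ := wlen_spec a hgen h
  calc wlen a (g * h) ≤ (u ++ v).length := wlen_le a (by rw [evalWord_append, hu, hv])
    _ = wlen a g + wlen a h := by rw [List.length_append, hul, hvl]

theorem wdist_triangle (a : A → G) (hgen : ∀ g : G, ∃ w : List A, evalWord a w = g)
    (x y z : G) : wdist a x z ≤ wdist a x y + wdist a y z := by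
  have : x⁻¹ * z = (x⁻¹ * y) * (y⁻¹ * z) := by group
  rw [wdist_eq, this]
  exact wlen_mul_le a hgen _ _

theorem eval_take_inv_mul (a : A → G) (w : List A) {i j : ℕ} (hij : i ≤ j) :
    (evalWord a (w.take i))⁻¹ * evalWord a (w.take j) = evalWord a ((w.take j).drop i) := by
  have h1 : (w.take j).take i = w.take i := by
    rw [List.take_take, min_eq_left hij]
  rw [← h1, inv_mul_eq_iff_eq_mul, ← evalWord_append, List.take_append_drop]

theorem wdist_take_le (a : A → G) (w : List A) {i j : ℕ} (hij : i ≤ j) (hj : j ≤ w.length) :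
    wdist a (evalWord a (w.take i)) (evalWord a (w.take j)) ≤ j - i := by
  rw [wdist_eq, eval_take_inv_mul a w hij]
  calc wlen a _ ≤ ((w.take j).drop i).length := wlen_le a rfl
    _ = j - i := by simp [Nat.min_eq_left hj]

theorem wdist_take_end_le (a : A → G) (w : List A) (i : ℕ) :
    wdist a (evalWord a (w.take i)) (evalWord a w) ≤ w.length - i := by
  rw [wdist_eq]
  have : (evalWord a (w.take i))⁻¹ * evalWord a w = evalWord a (w.drop i) := by
    rw [inv_mul_eq_iff_eq_mul, ← evalWord_append, List.take_append_drop]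
  rw [this]
  calc wlen a _ ≤ (w.drop i).length := wlen_le a rfl
    _ = w.length - i := by simp

/-- chain distances along a geodesic word are exact -/
theorem chain_dist (a : A → G) (hgen : ∀ g : G, ∃ w : List A, evalWord a w = g)
    {v : List A} (hgeo : v.length = wlen a (evalWord a v)) {s t : ℕ}
    (hst : s ≤ t) (ht : t ≤ v.length) :
    wdist a (evalWord a (v.take s)) (evalWord a (v.take t)) = t - s := by
  have hle := wdist_take_le a v hst ht
  have h1 : wdist a 1 (evalWord a (v.take s)) ≤ s := by
    rw [wdist_one_left]
    calc wlen a _ ≤ (v.take s).length := wlen_le a rfl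
      _ ≤ s := by simp
  have h2 := wdist_take_end_le a v t
  have h3 : v.length ≤ wdist a 1 (evalWord a (v.take s)) +
      (wdist a (evalWord a (v.take s)) (evalWord a (v.take t)) +
       wdist a (evalWord a (v.take t)) (evalWord a v)) := by
    rw [hgeo, ← wdist_one_left]
    calc wdist a 1 (evalWord a v) ≤ wdist a 1 (evalWord a (v.take s)) +
          wdist a (evalWord a (v.take s)) (evalWord a v) := wdist_triangle a hgen _ _ _
      _ ≤ _ := by
          have := wdist_triangle a hgen (evalWord a (v.take s)) (evalWord a (v.take t))
            (evalWord a v)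
          omega
  omega



noncomputable def dR (a : A → G) (x y : G) : ℝ := (wdist a x y : ℝ)

noncomputable def gpr (a : A → G) (p x y : G) : ℝ := (dR a p x + dR a p y - dR a x y) / 2

section Hyp
variable (a : A → G)
variable (hinv : ∀ x : A, ∃ y : A, a y = (a x)⁻¹)
variable (hgen : ∀ g : G, ∃ w : List A, evalWord a w = g)
include hinv hgen

theorem dR_comm (x y : G) : dR a x y = dR a y x := by
  unfold dR; rw [wdist_comm a hinv hgen]

theorem dR_tri (x y z : G) : dR a x z ≤ dR a x y + dR a y z := by
  unfold dR; exact_mod_cast wdist_triangle a hgen x y z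

theorem gpr_symm (x y p : G) : gpr a p x y = gpr a p y x := by
  unfold gpr; rw [dR_comm a hinv hgen x y]; ring

theorem gpr_le_left (p x y : G) : gpr a p x y ≤ dR a p x := by
  have := dR_tri a hinv hgen p x y
  unfold gpr; linarith

theorem gpr_le_right (p x y : G) : gpr a p x y ≤ dR a p y := by
  have h := dR_tri a hinv hgen p y x
  have := dR_comm a hinv hgen y x
  unfold gpr; linarith

theorem gp_ineq {δ : ℝ} (hhyp : FourPointHyperbolic a δ) (p x y t : G) :
    min (gpr a p x t) (gpr a p t y) - δ ≤ gpr a p x y := by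
  have h := hhyp x y p t
  have e1 : dR a x p = dR a p x := dR_comm a hinv hgen x p
  have e2 : dR a y p = dR a p y := dR_comm a hinv hgen y p
  have e3 : dR a t p = dR a p t := dR_comm a hinv hgen t p
  have e4 : dR a y t = dR a t y := dR_comm a hinv hgen y t
  have e5 : dR a x t = dR a t x := dR_comm a hinv hgen x t
  change (dR a x y) + dR a p t ≤ max (dR a x p + dR a y t) (dR a x t + dR a y p) + 2*δ at h
  rcases le_total (dR a x p + dR a y t) (dR a x t + dR a y p) with hm | hm
  · rw [max_eq_right hm] at h
    have h2 : min (gpr a p x t) (gpr a p t y) ≤ gpr a p x t := min_le_left _ _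
    unfold gpr at *; linarith
  · rw [max_eq_left hm] at h
    have h2 : min (gpr a p x t) (gpr a p t y) ≤ gpr a p t y := min_le_right _ _
    unfold gpr at *; linarith

end Hyp

section Hyp2
variable (a : A → G)
variable (hinv : ∀ x : A, ∃ y : A, a y = (a x)⁻¹)
variable (hgen : ∀ g : G, ∃ w : List A, evalWord a w = g)
include hinv hgen

theorem chain_dR {v : List A} (hgeo : v.length = wlen a (evalWord a v)) {s t : ℕ}
    (hst : s ≤ t) (ht : t ≤ v.length) :
    dR a (evalWord a (v.take s)) (evalWord a (v.take t)) = (t : ℝ) - s := by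
  unfold dR
  rw [chain_dist a hgen hgeo hst ht]
  push_cast [Nat.cast_sub hst]
  ring

theorem chain_dR_zero {v : List A} (hgeo : v.length = wlen a (evalWord a v)) {t : ℕ}
    (ht : t ≤ v.length) : dR a 1 (evalWord a (v.take t)) = (t : ℝ) := by
  have h := chain_dR a hinv hgen hgeo (Nat.zero_le t) ht
  simpa [evalWord_nil] using h

theorem chain_dR_end {v : List A} (hgeo : v.length = wlen a (evalWord a v)) {t : ℕ}
    (ht : t ≤ v.length) :
    dR a (evalWord a (v.take t)) (evalWord a v) = (v.length : ℝ) - t := by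
  have h := chain_dR a hinv hgen hgeo ht (le_refl v.length)
  simpa [List.take_length] using h

theorem slim {δ : ℝ} (hδ : 0 ≤ δ) (hhyp : FourPointHyperbolic a δ)
    (y z : G) (u v1 v2 : List A)
    (hu : evalWord a u = y) (hul : u.length = wlen a y)
    (hv1 : evalWord a v1 = z) (hv1l : v1.length = wlen a z)
    (hv2 : evalWord a v2 = z⁻¹ * y) (hv2l : v2.length = wlen a (z⁻¹ * y))
    (t : ℕ) (ht : t ≤ u.length) :
    (∃ j ≤ v1.length, (wdist a (evalWord a (u.take t)) (evalWord a (v1.take j)) : ℝ) ≤ 4*δ) ∨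
    (∃ j ≤ v2.length, (wdist a (evalWord a (u.take t)) (z * evalWord a (v2.take j)) : ℝ) ≤ 4*δ) := by
  have hgeou : u.length = wlen a (evalWord a u) := by rw [hu]; exact hul
  have hgeo1 : v1.length = wlen a (evalWord a v1) := by rw [hv1]; exact hv1l
  have hgeo2 : v2.length = wlen a (evalWord a v2) := by rw [hv2]; exact hv2l
  set m := evalWord a (u.take t) with hm
  have d1m : dR a 1 m = (t : ℝ) := chain_dR_zero a hinv hgen hgeou ht
  have dmy : dR a m y = (u.length : ℝ) - t := by
    have := chain_dR_end a hinv hgen hgeou ht; rwa [hu] at this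
  have d1y : dR a 1 y = (u.length : ℝ) := by
    unfold dR; rw [wdist_one_left, ← hul]
  have d1z : dR a 1 z = (v1.length : ℝ) := by
    unfold dR; rw [wdist_one_left, ← hv1l]
  have dzy : dR a z y = (v2.length : ℝ) := by
    unfold dR; rw [wdist_eq, ← hv2l]
  by_cases hcase : (t : ℝ) ≤ gpr a 1 y z
  · -- near the side from 1 to z
    have htv1 : t ≤ v1.length := by
      have h1 : gpr a 1 y z ≤ dR a 1 z := gpr_le_right a hinv hgen 1 y z
      have : (t : ℝ) ≤ (v1.length : ℝ) := by rw [← d1z]; linarith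
      exact_mod_cast this
    refine Or.inl ⟨t, htv1, ?_⟩
    set m' := evalWord a (v1.take t) with hm'
    have d1m' : dR a 1 m' = (t : ℝ) := chain_dR_zero a hinv hgen hgeo1 htv1
    have dm'z : dR a m' z = (v1.length : ℝ) - t := by
      have := chain_dR_end a hinv hgen hgeo1 htv1; rwa [hv1] at this
    have gmy : gpr a 1 m y = (t : ℝ) := by unfold gpr; rw [d1m, d1y, dmy]; ring
    have gm'z : gpr a 1 m' z = (t : ℝ) := by unfold gpr; rw [d1m', d1z, dm'z]; ring
    have h1 : min (gpr a 1 m y) (gpr a 1 y z) - δ ≤ gpr a 1 m z :=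
      gp_ineq a hinv hgen hhyp 1 m z y
    have h2 : min (gpr a 1 m z) (gpr a 1 z m') - δ ≤ gpr a 1 m m' :=
      gp_ineq a hinv hgen hhyp 1 m m' z
    have h3 : gpr a 1 z m' = gpr a 1 m' z := gpr_symm a hinv hgen z m' 1
    have hmz : (t : ℝ) - δ ≤ gpr a 1 m z := by
      rw [gmy] at h1
      have : min ((t:ℝ)) (gpr a 1 y z) = (t:ℝ) := min_eq_left hcase
      rw [this] at h1; exact h1
    have hmm' : (t : ℝ) - 2*δ ≤ gpr a 1 m m' := by
      rw [h3, gm'z] at h2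
      rcases min_cases (gpr a 1 m z) ((t:ℝ)) with ⟨he, _⟩ | ⟨he, _⟩ <;> rw [he] at h2 <;> linarith
    have hd : dR a m m' = dR a 1 m + dR a 1 m' - 2 * gpr a 1 m m' := by
      unfold gpr; ring
    have : dR a m m' ≤ 4*δ := by rw [hd, d1m, d1m']; linarith
    exact_mod_cast this
  · -- near the side from z to y
    push_neg at hcase
    have hsty : (u.length : ℝ) - t ≤ gpr a y 1 z := by
      have dy1 : dR a y 1 = (u.length : ℝ) := by rw [← d1y]; exact dR_comm a hinv hgen y 1
      have dyz : dR a y z = (v2.length : ℝ) := by rw [← dzy]; exact dR_comm a hinv hgen y z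
      have hgyz : gpr a 1 y z = (dR a 1 y + dR a 1 z - dR a y z)/2 := rfl
      have : gpr a y 1 z = (dR a y 1 + dR a y z - dR a 1 z)/2 := rfl
      rw [this, dy1, dyz, ← dzy]
      rw [hgyz, d1y] at hcase
      have := dR_comm a hinv hgen y z
      linarith
    set s : ℕ := u.length - t with hs
    have hsr : (s : ℝ) = (u.length : ℝ) - t := by
      rw [hs]; push_cast [Nat.cast_sub ht]; ring
    have hsv2 : s ≤ v2.length := by
      have h1 : gpr a y 1 z ≤ dR a y z := gpr_le_right a hinv hgen y 1 z
      have dyz : dR a y z = (v2.length : ℝ) := by rw [← dzy]; exact dR_comm a hinv hgen y z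
      have : (s : ℝ) ≤ (v2.length : ℝ) := by rw [hsr, ← dyz]; linarith
      exact_mod_cast this
    set j : ℕ := v2.length - s with hj
    have hjv2 : j ≤ v2.length := Nat.sub_le _ _
    refine Or.inr ⟨j, hjv2, ?_⟩
    set m' := z * evalWord a (v2.take j) with hm'
    have hinvar : ∀ j1 j2 : ℕ, j1 ≤ j2 → j2 ≤ v2.length →
        dR a (z * evalWord a (v2.take j1)) (z * evalWord a (v2.take j2)) = (j2:ℝ) - j1 := by
      intro j1 j2 h12 h2
      have h := chain_dR a hinv hgen hgeo2 h12 h2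
      unfold dR at h ⊢
      rw [wdist_mul_left]
      exact h
    have hzc_end : z * evalWord a (v2.take v2.length) = y := by
      rw [List.take_length, hv2]; group
    have hzc_zero : z * evalWord a (v2.take 0) = z := by simp [evalWord_nil]
    have dm'y : dR a m' y = (s : ℝ) := by
      have h1 := hinvar j v2.length hjv2 (le_refl _)
      rw [hzc_end] at h1
      rw [hm', h1]
      have : (v2.length : ℝ) - j = (s : ℝ) := by
        rw [hj]; push_cast [Nat.cast_sub hsv2]; ring
      rw [this]
    have dym' : dR a y m' = (s : ℝ) := by rw [← dm'y]; exact dR_comm a hinv hgen y m'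
    have dzm' : dR a z m' = (j : ℝ) := by
      have h1 := hinvar 0 j (Nat.zero_le _) hjv2
      rw [hzc_zero] at h1
      simpa [evalWord_nil, hm'] using h1
    have dym : dR a y m = (s : ℝ) := by
      rw [hsr, ← dmy]; exact dR_comm a hinv hgen y m
    have dy1 : dR a y 1 = (u.length : ℝ) := by
      rw [← d1y]; exact dR_comm a hinv hgen y 1
    have dm1 : dR a m 1 = (t : ℝ) := by rw [← d1m]; exact dR_comm a hinv hgen m 1
    have gm1 : gpr a y m 1 = (s : ℝ) := by
      unfold gpr; rw [dym, dy1, dm1, hsr]; ring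
    have gm'z : gpr a y m' z = (s : ℝ) := by
      have dm'z : dR a m' z = (j : ℝ) := by rw [← dzm']; exact dR_comm a hinv hgen m' z
      have dyz : dR a y z = (v2.length : ℝ) := by rw [← dzy]; exact dR_comm a hinv hgen y z
      have hvj : (v2.length : ℝ) - j = (s : ℝ) := by
        rw [hj]; push_cast [Nat.cast_sub hsv2]; ring
      unfold gpr; rw [dym', dyz, dm'z]; linarith
    have h1 : min (gpr a y m 1) (gpr a y 1 z) - δ ≤ gpr a y m z :=
      gp_ineq a hinv hgen hhyp y m z 1
    have h2 : min (gpr a y m z) (gpr a y z m') - δ ≤ gpr a y m m' :=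
      gp_ineq a hinv hgen hhyp y m m' z
    have h3 : gpr a y z m' = gpr a y m' z := gpr_symm a hinv hgen z m' y
    have hmz : (s : ℝ) - δ ≤ gpr a y m z := by
      rw [gm1] at h1
      have : min ((s:ℝ)) (gpr a y 1 z) = (s:ℝ) := min_eq_left (by rw [hsr]; exact hsty)
      rw [this] at h1; exact h1
    have hmm' : (s : ℝ) - 2*δ ≤ gpr a y m m' := by
      rw [h3, gm'z] at h2
      rcases min_cases (gpr a y m z) ((s:ℝ)) with ⟨he, _⟩ | ⟨he, _⟩ <;> rw [he] at h2 <;> linarith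
    have hd : dR a m m' = dR a y m + dR a y m' - 2 * gpr a y m m' := by
      unfold gpr; ring
    have : dR a m m' ≤ 4*δ := by rw [hd, dym, dym']; linarith
    exact_mod_cast this

end Hyp2

section Hyp3
variable (a : A → G)
variable (hinv : ∀ x : A, ∃ y : A, a y = (a x)⁻¹)
variable (hgen : ∀ g : G, ∃ w : List A, evalWord a w = g)
include hinv hgen

omit hinv hgen in
theorem log_endpoints (C : ℝ) (hC : 0 ≤ C) (w v : List A) (hv : evalWord a v = evalWord a w)
    (t : ℕ) (hT : t = 0 ∨ t = v.length) :
    ∃ k, k ≤ w.length ∧ (wdist a (evalWord a (v.take t)) (evalWord a (w.take k)) : ℝ) ≤ C := by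
  rcases hT with rfl | rfl
  · refine ⟨0, Nat.zero_le _, ?_⟩
    simp only [List.take_zero, evalWord_nil, wdist_self]
    simpa using hC
  · refine ⟨w.length, le_refl _, ?_⟩
    simp only [List.take_length, hv, wdist_self]
    simpa using hC

theorem log_lemma {δ : ℝ} (hδ : 0 ≤ δ) (hhyp : FourPointHyperbolic a δ) (N : ℕ) :
    ∀ w v : List A, evalWord a v = evalWord a w → v.length = wlen a (evalWord a w) →
    w.length ≤ 2^N → ∀ t, t ≤ v.length → ∃ k, k ≤ w.length ∧
      (wdist a (evalWord a (v.take t)) (evalWord a (w.take k)) : ℝ) ≤ 4*δ*N + 1 := by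
  induction N with
  | zero =>
    intro w v hv hvl hw t ht
    have hvlen : v.length ≤ w.length := by
      rw [hvl]; exact wlen_le a rfl
    have : t = 0 ∨ t = v.length := by omega
    have hC : (0:ℝ) ≤ 4*δ*(0:ℕ) + 1 := by push_cast; linarith
    exact log_endpoints a _ hC w v hv t this
  | succ N ih =>
    intro w v hv hvl hw t ht
    have hC : (0:ℝ) ≤ 4*δ*((N+1:ℕ):ℝ) + 1 := by positivity
    by_cases hsmall : w.length ≤ 1
    · have hvlen : v.length ≤ w.length := by rw [hvl]; exact wlen_le a rfl
      have : t = 0 ∨ t = v.length := by omega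
      exact log_endpoints a _ hC w v hv t this
    · push_neg at hsmall
      set n := w.length with hn
      set h := (n+1)/2 with hh
      have hpow : 2^(N+1) = 2^N * 2 := pow_succ 2 N
      have hh2N : h ≤ 2^N := by omega
      have hn2N : n - h ≤ 2^N := by omega
      have hhn : h ≤ n := by omega
      set y := evalWord a w with hy
      set z := evalWord a (w.take h) with hz
      obtain ⟨v1, hv1, hv1l⟩ := wlen_spec a hgen z
      obtain ⟨v2, hv2, hv2l⟩ := wlen_spec a hgen (z⁻¹ * y)
      have hvly : v.length = wlen a y := hvl
      have hsl := slim a hinv hgen hδ hhyp y z v v1 v2 hv hvly hv1 hv1l hv2 hv2l t ht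
      have hdropval : evalWord a (w.drop h) = z⁻¹ * y := by
        rw [hy, hz, evalWord_take_drop a w h]; group
      rcases hsl with ⟨j, hj, hd⟩ | ⟨j, hj, hd⟩
      · -- recurse on the first half
        have htake : (w.take h).length = h := by
          rw [List.length_take]; omega
        obtain ⟨k, hk, hdk⟩ := ih (w.take h) v1
          (by rw [hv1, hz]) (by rw [hv1l, hz]) (by rw [htake]; exact hh2N) j hj
        rw [htake] at hk
        have hkk : (w.take h).take k = w.take k := by
          rw [List.take_take, min_eq_left hk]
        rw [hkk] at hdk
        refine ⟨k, le_trans hk hhn, ?_⟩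
        have htri : (wdist a (evalWord a (v.take t)) (evalWord a (w.take k)) : ℝ) ≤
            (wdist a (evalWord a (v.take t)) (evalWord a (v1.take j)) : ℝ) +
            (wdist a (evalWord a (v1.take j)) (evalWord a (w.take k)) : ℝ) := by
          exact_mod_cast wdist_triangle a hgen _ _ _
        push_cast
        push_cast at hdk
        linarith
      · -- recurse on the second half
        have hdrop : (w.drop h).length = n - h := by
          rw [List.length_drop]
        obtain ⟨k, hk, hdk⟩ := ih (w.drop h) v2
          (by rw [hv2, hdropval]) (by rw [hv2l, hdropval]) (by rw [hdrop]; exact hn2N) j hj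
        rw [hdrop] at hk
        have hmul : (wdist a (z * evalWord a (v2.take j)) (z * evalWord a ((w.drop h).take k)) : ℝ)
            = (wdist a (evalWord a (v2.take j)) (evalWord a ((w.drop h).take k)) : ℝ) := by
          rw [wdist_mul_left]
        have hzval : z * evalWord a ((w.drop h).take k) = evalWord a (w.take (h+k)) := by
          rw [List.take_add, evalWord_append, hz]
        refine ⟨h + k, by omega, ?_⟩
        rw [← hzval]
        have htri : (wdist a (evalWord a (v.take t)) (z * evalWord a ((w.drop h).take k)) : ℝ) ≤
            (wdist a (evalWord a (v.take t)) (z * evalWord a (v2.take j)) : ℝ) +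
            (wdist a (z * evalWord a (v2.take j)) (z * evalWord a ((w.drop h).take k)) : ℝ) := by
          exact_mod_cast wdist_triangle a hgen _ _ _
        rw [hmul] at htri
        push_cast
        push_cast at hdk
        linarith

end Hyp3

theorem seg_val (a : A → G) (w : List A) (k s : ℕ) :
    evalWord a (w.take k) * evalWord a ((w.drop k).take s) = evalWord a (w.take (k+s)) := by
  rw [List.take_add, evalWord_append]

theorem invWord_take (a : A → G) (hinv : ∀ x : A, ∃ y : A, a y = (a x)⁻¹)
    (w : List A) {s : ℕ} (hs : s ≤ w.length) :
    (invWord a hinv w).take s = invWord a hinv (w.drop (w.length - s)) := by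
  conv_lhs => rw [← List.take_append_drop (w.length - s) w]
  rw [invWord_append]
  have hl : (invWord a hinv (w.drop (w.length - s))).length = s := by
    rw [invWord_length, List.length_drop]; omega
  rw [List.take_left' hl]

theorem mid_word (a : A → G) (hinv : ∀ x : A, ∃ y : A, a y = (a x)⁻¹)
    (w : List A) (k1 k2 : ℕ) (hk1 : k1 ≤ w.length) (hk2 : k2 ≤ w.length) :
    ∃ M : List A, M.length = (k2 - k1) + (k1 - k2) ∧
      evalWord a (w.take k1) * evalWord a M = evalWord a (w.take k2) ∧
      ∀ s ≤ M.length, ∃ jj ≤ w.length,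
        evalWord a (w.take k1) * evalWord a (M.take s) = evalWord a (w.take jj) := by
  rcases le_total k1 k2 with hle | hle
  · refine ⟨(w.drop k1).take (k2 - k1), ?_, ?_, ?_⟩
    · rw [List.length_take, List.length_drop]; omega
    · have := seg_val a w k1 (k2 - k1)
      rwa [show k1 + (k2 - k1) = k2 by omega] at this
    · intro s hsle
      rw [List.length_take, List.length_drop] at hsle
      refine ⟨k1 + s, by omega, ?_⟩
      rw [List.take_take, min_eq_left (by omega : s ≤ k2 - k1)]
      exact seg_val a w k1 s
  · set r : ℕ := k1 - k2 with hr
    set seg : List A := (w.drop k2).take r with hseg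
    have hsegl : seg.length = r := by
      rw [hseg, List.length_take, List.length_drop]; omega
    have hsegval : evalWord a (w.take k2) * evalWord a seg = evalWord a (w.take k1) := by
      have := seg_val a w k2 r
      rwa [show k2 + r = k1 by omega] at this
    refine ⟨invWord a hinv seg, ?_, ?_, ?_⟩
    · rw [invWord_length, hsegl]; omega
    · rw [evalWord_invWord]
      have : evalWord a seg = (evalWord a (w.take k2))⁻¹ * evalWord a (w.take k1) := by
        rw [← hsegval]; group
      rw [this]; group
    · intro s hsle
      rw [invWord_length, hsegl] at hsle
      refine ⟨k2 + (r - s), by omega, ?_⟩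
      rw [invWord_take a hinv seg (by omega), hsegl, evalWord_invWord]
      have hsplit : evalWord a seg =
          evalWord a (seg.take (r - s)) * evalWord a (seg.drop (r - s)) :=
        evalWord_take_drop a seg (r - s)
      have htk : evalWord a (w.take k2) * evalWord a (seg.take (r - s)) =
          evalWord a (w.take (k2 + (r - s))) := by
        rw [hseg, List.take_take, min_eq_left (by omega : r - s ≤ r)]
        exact seg_val a w k2 (r - s)
      have hdropv : evalWord a (seg.drop (r - s)) =
          (evalWord a (w.take (k2 + (r - s))))⁻¹ * evalWord a (w.take k1) := by
        rw [← htk, ← hsegval, hsplit]; group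
      rw [hdropv]; group

/-- self-improvement bound: x ≤ a √x + b forces x ≤ (a+b)^2 -/
theorem sqrt_bound {x c b : ℝ} (hx : 0 ≤ x) (hc : 0 ≤ c) (hb : 1 ≤ b)
    (h : x ≤ c * Real.sqrt x + b) : x ≤ (c + b)^2 := by
  by_contra hcon
  push_neg at hcon
  have hcb : 0 ≤ c + b := by linarith
  have hs : c + b < Real.sqrt x := by
    have := Real.lt_sqrt (x := c + b) (y := x) hcb
    exact this.mpr (by nlinarith)
  have hs1 : 1 ≤ Real.sqrt x := by linarith
  have : x ≤ (c + b) * Real.sqrt x := by nlinarith [Real.sq_sqrt hx]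
  nlinarith [Real.sq_sqrt hx, Real.sqrt_nonneg x]

theorem sqrt_add_le {x y : ℝ} (hx : 0 ≤ x) (hy : 0 ≤ y) :
    Real.sqrt (x + y) ≤ Real.sqrt x + Real.sqrt y := by
  have h1 := Real.sq_sqrt hx
  have h2 := Real.sq_sqrt hy
  have h3 := Real.sqrt_nonneg x
  have h4 := Real.sqrt_nonneg y
  have h : x + y ≤ (Real.sqrt x + Real.sqrt y)^2 := by nlinarith [mul_nonneg h3 h4]
  have := Real.sqrt_le_sqrt h
  rwa [Real.sqrt_sq (by linarith)] at this

theorem natlog_le_sqrt (P : ℕ) (hP : 1 ≤ P) :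
    (Nat.log 2 P : ℝ) ≤ 3 * Real.sqrt P := by
  have hp1 : (1:ℝ) ≤ (P:ℝ) := by exact_mod_cast hP
  have hpow : (2:ℝ)^(Nat.log 2 P) ≤ (P:ℝ) := by
    exact_mod_cast Nat.pow_log_le_self 2 (by omega)
  have hk : (Nat.log 2 P : ℝ) * Real.log 2 ≤ Real.log P := by
    have := Real.log_le_log (by positivity) hpow
    rw [Real.log_pow] at this
    linarith
  have hlog2 : (2:ℝ)/3 ≤ Real.log 2 := by
    have := Real.log_two_gt_d9; linarith
  have hsp : 0 < Real.sqrt P := Real.sqrt_pos.mpr (by linarith)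
  have hlogP : Real.log P ≤ 2 * Real.sqrt P := by
    have h2 := Real.log_le_sub_one_of_pos hsp
    rw [Real.log_sqrt (by linarith)] at h2
    linarith
  have hk0 : (0:ℝ) ≤ (Nat.log 2 P : ℝ) := Nat.cast_nonneg _
  nlinarith

theorem unif_bound (δ c1 c2 : ℝ) (hδ : 0 ≤ δ) (hc1 : 0 ≤ c1) (hc2 : 0 ≤ c2) :
    ∃ D0 : ℝ, 0 ≤ D0 ∧ ∀ D P : ℕ, (D:ℝ) ≤ 4*δ*((Nat.log 2 P : ℝ) + 1) + 1 →
      (P:ℝ) ≤ c1 * D + c2 → (D:ℝ) ≤ D0 := by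
  set c : ℝ := 12*δ*Real.sqrt c1 with hc
  set b : ℝ := 12*δ*Real.sqrt c2 + 4*δ + 1 with hb
  have hc0 : 0 ≤ c := by positivity
  have hb1 : 1 ≤ b := by
    have := Real.sqrt_nonneg c2
    nlinarith
  refine ⟨max (4*δ+1) ((c+b)^2), le_max_of_le_left (by linarith), ?_⟩
  intro D P h1 h2
  rcases Nat.eq_zero_or_pos P with rfl | hP
  · simp only [Nat.log_zero_right, Nat.cast_zero] at h1
    calc (D:ℝ) ≤ 4*δ*(0+1)+1 := h1
      _ ≤ 4*δ+1 := by linarith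
      _ ≤ _ := le_max_left _ _
  · have hk := natlog_le_sqrt P hP
    have hsP : Real.sqrt P ≤ Real.sqrt c1 * Real.sqrt D + Real.sqrt c2 := by
      calc Real.sqrt P ≤ Real.sqrt (c1 * D + c2) := Real.sqrt_le_sqrt h2
        _ ≤ Real.sqrt (c1 * D) + Real.sqrt c2 := sqrt_add_le (by positivity) hc2
        _ = Real.sqrt c1 * Real.sqrt D + Real.sqrt c2 := by rw [Real.sqrt_mul hc1]
    have hmain : (D:ℝ) ≤ c * Real.sqrt D + b := by
      have hstep : 4*δ*((Nat.log 2 P : ℝ) + 1) ≤ 4*δ*(3*(Real.sqrt c1 * Real.sqrt D + Real.sqrt c2) + 1) := by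
        apply mul_le_mul_of_nonneg_left _ (by positivity)
        linarith
      rw [hc, hb]; nlinarith
    have := sqrt_bound (x := (D:ℝ)) (Nat.cast_nonneg D) hc0 hb1 hmain
    exact le_trans this (le_max_right _ _)

set_option maxHeartbeats 1000000 in
theorem stepI (a : A → G) (hinv : ∀ x : A, ∃ y : A, a y = (a x)⁻¹)
    (hgen : ∀ g : G, ∃ w : List A, evalWord a w = g) {δ lam : ℝ} (hδ : 0 ≤ δ)
    (hhyp : FourPointHyperbolic a δ) (hlam : 1 ≤ lam) (w : List A)
    (hqg : ∀ i j : ℕ, i ≤ j → j ≤ w.length →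
      ((j : ℝ) - i) ≤ lam * wdist a (evalWord a (w.take i)) (evalWord a (w.take j)) + lam)
    (v : List A) (hvval : evalWord a v = evalWord a w)
    (hvlen : v.length = wlen a (evalWord a w))
    (D0R : ℝ)
    (hD0 : ∀ D P : ℕ, (D:ℝ) ≤ 4*(2*δ+1)*((Nat.log 2 P : ℝ) + 1) + 1 →
      (P:ℝ) ≤ (6*lam+2) * (D:ℝ) + lam → (D:ℝ) ≤ D0R) :
    ∀ t, t ≤ v.length → ∃ k, k ≤ w.length ∧
      (wdist a (evalWord a (v.take t)) (evalWord a (w.take k)) : ℝ) ≤ D0R := by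
  have commR : ∀ x y : G, (wdist a x y : ℝ) = wdist a y x := by
    intro x y; exact_mod_cast wdist_comm a hinv hgen x y
  have tri : ∀ x y z : G, (wdist a x z : ℝ) ≤ wdist a x y + wdist a y z := by
    intro x y z; exact_mod_cast wdist_triangle a hgen x y z
  set n := w.length with hn
  have hne : (Finset.range (n+1)).Nonempty := ⟨0, by simp⟩
  have hne2 : (Finset.range (v.length+1)).Nonempty := ⟨0, by simp⟩
  set q : ℕ → G := fun k => evalWord a (w.take k) with hq
  set c : ℕ → G := fun t => evalWord a (v.take t) with hc
  set F : ℕ → ℕ := fun t => (Finset.range (n+1)).inf' hne (fun k => wdist a (c t) (q k)) with hF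
  set D : ℕ := (Finset.range (v.length+1)).sup' hne2 F with hD
  have hgeov : v.length = wlen a (evalWord a v) := by rw [hvval]; exact hvlen
  have hFle : ∀ t, t ≤ v.length → F t ≤ D := fun t ht =>
    Finset.le_sup' F (Finset.mem_range.mpr (by omega))
  have hFex : ∀ t, ∃ k, k ≤ n ∧ wdist a (c t) (q k) = F t := by
    intro t
    obtain ⟨k, hk, he⟩ := Finset.exists_mem_eq_inf' hne (fun k => wdist a (c t) (q k))
    have hkn := Finset.mem_range.mp hk
    exact ⟨k, by omega, he.symm⟩
  have hFmin : ∀ t k, k ≤ n → F t ≤ wdist a (c t) (q k) := fun t k hk =>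
    Finset.inf'_le _ (Finset.mem_range.mpr (by omega))
  have hkey : (D:ℝ) ≤ D0R := by
    obtain ⟨tstar, htsm, hDt⟩ := Finset.exists_mem_eq_sup' hne2 F
    have htsv : tstar ≤ v.length := by have := Finset.mem_range.mp htsm; omega
    set t1 := tstar - 2*D with ht1
    set t2 := min v.length (tstar + 2*D) with ht2
    have ht1s : t1 ≤ tstar := Nat.sub_le _ _
    have hst2 : tstar ≤ t2 := le_min htsv (Nat.le_add_right _ _)
    have ht2v : t2 ≤ v.length := min_le_left _ _
    have h12 : t1 ≤ t2 := le_trans ht1s hst2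
    have hd_x'm : wdist a (c t1) (c tstar) = tstar - t1 := chain_dist a hgen hgeov ht1s htsv
    have hd_my' : wdist a (c tstar) (c t2) = t2 - tstar := chain_dist a hgen hgeov hst2 ht2v
    obtain ⟨k1, hk1n, hk1d⟩ : ∃ k1, k1 ≤ n ∧ wdist a (c t1) (q k1) ≤ D := by
      obtain ⟨k, hk, he⟩ := hFex t1
      exact ⟨k, hk, by rw [he]; exact hFle t1 (by omega)⟩
    obtain ⟨k2, hk2n, hk2d⟩ : ∃ k2, k2 ≤ n ∧ wdist a (c t2) (q k2) ≤ D := by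
      obtain ⟨k, hk, he⟩ := hFex t2
      exact ⟨k, hk, by rw [he]; exact hFle t2 ht2v⟩
    obtain ⟨g1, hg1v, hg1l⟩ := wlen_spec a hgen ((c t1)⁻¹ * q k1)
    have hg1len : g1.length ≤ D := by rw [hg1l]; exact hk1d
    obtain ⟨g2, hg2v, hg2l⟩ := wlen_spec a hgen ((q k2)⁻¹ * c t2)
    have hg2len : g2.length ≤ D := by
      rw [hg2l]
      have h1 : wlen a ((q k2)⁻¹ * c t2) = wdist a (q k2) (c t2) := rfl
      rw [h1, wdist_comm a hinv hgen]
      exact hk2d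
    obtain ⟨M, hMl, hMv, hMpts⟩ := mid_word a hinv w k1 k2 hk1n hk2n
    have hMvq : q k1 * evalWord a M = q k2 := hMv
    have hqq : wdist a (q k1) (q k2) ≤ 6*D := by
      have h1 := wdist_triangle a hgen (q k1) (c t1) (q k2)
      have h2 := wdist_triangle a hgen (c t1) (c t2) (q k2)
      have h3 : wdist a (q k1) (c t1) = wdist a (c t1) (q k1) := wdist_comm a hinv hgen _ _
      have h4 : wdist a (c t2) (q k2) ≤ D := hk2d
      have h5 : wdist a (c t1) (c t2) = t2 - t1 := chain_dist a hgen hgeov h12 ht2v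
      omega
    have hqqR : (wdist a (q k1) (q k2) : ℝ) ≤ 6*(D:ℝ) := by exact_mod_cast hqq
    have hg1D : (g1.length : ℝ) ≤ (D:ℝ) := by exact_mod_cast hg1len
    have hg2D : (g2.length : ℝ) ≤ (D:ℝ) := by exact_mod_cast hg2len
    have hMlen : (M.length : ℝ) ≤ lam * (6*(D:ℝ)) + lam := by
      rcases le_total k1 k2 with hkk | hkk
      · have h1 : ((k2:ℝ)) - k1 ≤ lam * wdist a (q k1) (q k2) + lam := hqg k1 k2 hkk hk2n
        have h2n : M.length = k2 - k1 := by omega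
        have h2 : (M.length:ℝ) = (k2:ℝ) - k1 := by rw [h2n]; push_cast [Nat.cast_sub hkk]; ring
        have h3 : lam * (wdist a (q k1) (q k2):ℝ) ≤ lam * (6*(D:ℝ)) :=
          mul_le_mul_of_nonneg_left hqqR (by linarith)
        linarith
      · have h1 : ((k1:ℝ)) - k2 ≤ lam * wdist a (q k2) (q k1) + lam := hqg k2 k1 hkk hk1n
        have h2n : M.length = k1 - k2 := by omega
        have h2 : (M.length:ℝ) = (k1:ℝ) - k2 := by rw [h2n]; push_cast [Nat.cast_sub hkk]; ring
        have h4 : (wdist a (q k2) (q k1) : ℝ) = wdist a (q k1) (q k2) := commR _ _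
        have h3 : lam * (wdist a (q k2) (q k1):ℝ) ≤ lam * (6*(D:ℝ)) := by
          rw [h4]; exact mul_le_mul_of_nonneg_left hqqR (by linarith)
        linarith
    -- the connecting path P
    set P := g1 ++ (M ++ g2) with hP
    have hMv' : evalWord a M = (q k1)⁻¹ * q k2 := by rw [← hMvq]; group
    have hPval : evalWord a P = (c t1)⁻¹ * c t2 := by
      rw [hP, evalWord_append, evalWord_append, hg1v, hMv', hg2v]; group
    have hPlen : P.length = g1.length + (M.length + g2.length) := by simp [hP]
    set vseg := (v.take t2).drop t1 with hvseg
    have hvsegval : evalWord a vseg = (c t1)⁻¹ * c t2 := (eval_take_inv_mul a v h12).symm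
    have hvsegl : vseg.length = t2 - t1 := by
      rw [hvseg, List.length_drop, List.length_take]; omega
    have hvseggeo : vseg.length = wlen a (evalWord a P) := by
      rw [hPval, hvsegl]
      have h1 : wlen a ((c t1)⁻¹ * c t2) = wdist a (c t1) (c t2) := rfl
      rw [h1, chain_dist a hgen hgeov h12 ht2v]
    have hvsegeq : evalWord a vseg = evalWord a P := by rw [hvsegval, hPval]
    set NN := Nat.log 2 P.length + 1 with hNN
    have hPpow : P.length ≤ 2^NN := (Nat.lt_pow_succ_log_self (by norm_num) P.length).le
    set sstar := tstar - t1 with hss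
    have hssle : sstar ≤ vseg.length := by omega
    obtain ⟨k, hkP, hdk⟩ := log_lemma a hinv hgen hδ hhyp NN P vseg hvsegeq hvseggeo hPpow
      sstar hssle
    set B : ℝ := 4*δ*(NN:ℝ) + 1 with hB
    have hB0 : (0:ℝ) ≤ B := by rw [hB]; positivity
    have hmchain : c t1 * evalWord a (vseg.take sstar) = c tstar := by
      have h2 := seg_val a (v.take t2) t1 sstar
      simp only [List.take_take] at h2
      rw [min_eq_left h12, min_eq_left (by omega : t1 + sstar ≤ t2)] at h2
      rw [show t1 + sstar = tstar by omega] at h2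
      exact h2
    set ψ := c t1 * evalWord a (P.take k) with hψ
    have hdmψ : (wdist a (c tstar) ψ : ℝ) ≤ B := by
      rw [← hmchain, hψ, wdist_mul_left, hB]
      exact hdk
    have hDlow : ∀ j, j ≤ n → (D:ℝ) ≤ (wdist a (c tstar) (q j) : ℝ) := by
      intro j hj
      have h1 := hFmin tstar j hj
      have h2 : D ≤ wdist a (c tstar) (q j) := by
        have h3 : D = F tstar := hDt
        omega
      exact_mod_cast h2
    have hDB : (D:ℝ) ≤ 2*B := by
      rcases le_or_gt k g1.length with hcs1 | hcs1
      · -- ψ on the connector g1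
        have hPtk : P.take k = g1.take k := by
          rw [hP, List.take_append, show k - g1.length = 0 by omega,
            List.take_zero, List.append_nil]
        have hdψx' : (wdist a (c t1) ψ : ℝ) ≤ (k:ℝ) := by
          rw [hψ, hPtk]
          have he1 : wdist a (c t1) (c t1 * evalWord a (g1.take k)) =
              wlen a (evalWord a (g1.take k)) := by
            rw [wdist_eq]; congr 1; group
          rw [he1]
          have h2 : wlen a (evalWord a (g1.take k)) ≤ k := by
            calc wlen a (evalWord a (g1.take k)) ≤ (g1.take k).length := wlen_le a rfl
              _ ≤ k := List.length_take_le _ _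
          exact_mod_cast h2
        have hdψq1 : (wdist a ψ (q k1) : ℝ) ≤ (g1.length:ℝ) - k := by
          have hval : ψ⁻¹ * q k1 = evalWord a (g1.drop k) := by
            have h3 := evalWord_take_drop a g1 k
            have h4 : evalWord a (g1.drop k) = (evalWord a (g1.take k))⁻¹ * evalWord a g1 := by
              rw [h3]; group
            rw [hψ, hPtk, h4, hg1v]; group
          have h5 : wdist a ψ (q k1) ≤ g1.length - k := by
            rw [wdist_eq, hval]
            calc wlen a _ ≤ (g1.drop k).length := wlen_le a rfl
              _ = g1.length - k := List.length_drop
          calc (wdist a ψ (q k1):ℝ) ≤ ((g1.length - k : ℕ) : ℝ) := by exact_mod_cast h5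
            _ = (g1.length:ℝ) - k := by push_cast [Nat.cast_sub hcs1]; ring
        have h6 := hDlow k1 hk1n
        have h7 := tri (c tstar) ψ (q k1)
        by_cases ht10 : t1 = 0
        · have hx' : c t1 = q 0 := by
            show evalWord a (v.take t1) = evalWord a (w.take 0)
            rw [ht10]; simp
          have h8 := hDlow 0 (Nat.zero_le n)
          rw [← hx'] at h8
          have h9 := tri (c tstar) ψ (c t1)
          have h10 := commR (c t1) ψ
          linarith
        · have h2Deq : tstar - t1 = 2*D := by omega
          have h11 : (wdist a (c tstar) (c t1) : ℝ) = 2*(D:ℝ) := by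
            have e1 : wdist a (c tstar) (c t1) = 2*D := by
              rw [wdist_comm a hinv hgen, hd_x'm]; omega
            rw [e1]; push_cast; ring
          have h9 := tri (c tstar) ψ (c t1)
          have h10 := commR (c t1) ψ
          linarith
      rcases le_or_gt k (g1.length + M.length) with hcs2 | hcs2
      · -- ψ on the middle path M: it is a path point
        have hsM : k - g1.length ≤ M.length := by omega
        have hPtk : P.take k = g1 ++ M.take (k - g1.length) := by
          rw [hP, List.take_append,
            List.take_of_length_le (by omega : g1.length ≤ k)]
          congr 1
          rw [List.take_append, show k - g1.length - M.length = 0 by omega,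
            List.take_zero, List.append_nil]
        obtain ⟨jj, hjjn, hjjval⟩ := hMpts (k - g1.length) hsM
        have hψq : ψ = q jj := by
          rw [hψ, hPtk, evalWord_append]
          have hck : c t1 * evalWord a g1 = q k1 := by rw [hg1v]; group
          rw [← mul_assoc, hck]
          exact hjjval
        have h6 := hDlow jj (by omega)
        rw [← hψq] at h6
        linarith
      · -- ψ on the connector g2
        set s2 := k - g1.length - M.length with hs2
        have hsg2 : s2 ≤ g2.length := by
          rw [hPlen] at hkP; omega
        have hPtk : P.take k = g1 ++ (M ++ g2.take s2) := by
          rw [hP, List.take_append,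
            List.take_of_length_le (by omega : g1.length ≤ k)]
          congr 1
          rw [List.take_append,
            List.take_of_length_le (by omega : M.length ≤ k - g1.length)]
        have hck : c t1 * evalWord a g1 = q k1 := by rw [hg1v]; group
        have hψval : ψ = q k2 * evalWord a (g2.take s2) := by
          rw [hψ, hPtk, evalWord_append, evalWord_append]
          calc c t1 * (evalWord a g1 * (evalWord a M * evalWord a (g2.take s2)))
              = ((c t1 * evalWord a g1) * evalWord a M) * evalWord a (g2.take s2) := by group
            _ = q k2 * evalWord a (g2.take s2) := by rw [hck, hMvq]
        have hdq2ψ : (wdist a (q k2) ψ : ℝ) ≤ (s2:ℝ) := by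
          rw [hψval]
          have he1 : wdist a (q k2) (q k2 * evalWord a (g2.take s2)) =
              wlen a (evalWord a (g2.take s2)) := by
            rw [wdist_eq]; congr 1; group
          rw [he1]
          have h2 : wlen a (evalWord a (g2.take s2)) ≤ s2 := by
            calc wlen a (evalWord a (g2.take s2)) ≤ (g2.take s2).length := wlen_le a rfl
              _ ≤ s2 := List.length_take_le _ _
          exact_mod_cast h2
        have hdψy' : (wdist a ψ (c t2) : ℝ) ≤ (g2.length:ℝ) - s2 := by
          have hval : ψ⁻¹ * c t2 = evalWord a (g2.drop s2) := by
            have h3 := evalWord_take_drop a g2 s2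
            have h4 : evalWord a (g2.drop s2) = (evalWord a (g2.take s2))⁻¹ * evalWord a g2 := by
              rw [h3]; group
            rw [hψval, h4, hg2v]; group
          have h5 : wdist a ψ (c t2) ≤ g2.length - s2 := by
            rw [wdist_eq, hval]
            calc wlen a _ ≤ (g2.drop s2).length := wlen_le a rfl
              _ = g2.length - s2 := List.length_drop
          calc (wdist a ψ (c t2):ℝ) ≤ ((g2.length - s2 : ℕ) : ℝ) := by exact_mod_cast h5
            _ = (g2.length:ℝ) - s2 := by push_cast [Nat.cast_sub hsg2]; ring
        have h6 := hDlow k2 hk2n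
        have h7 := tri (c tstar) ψ (q k2)
        have h8 := commR (q k2) ψ
        by_cases ht2e : t2 = v.length
        · have hy' : c t2 = q n := by
            show evalWord a (v.take t2) = evalWord a (w.take n)
            rw [ht2e, List.take_length, hvval, hn, List.take_length]
          have h9 := hDlow n (le_refl n)
          rw [← hy'] at h9
          have h10 := tri (c tstar) ψ (c t2)
          linarith
        · have h2Deq : t2 - tstar = 2*D := by omega
          have h11 : (wdist a (c tstar) (c t2) : ℝ) = 2*(D:ℝ) := by
            have e1 : wdist a (c tstar) (c t2) = 2*D := by rw [hd_my']; omega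
            rw [e1]; push_cast; ring
          have h10 := tri (c tstar) ψ (c t2)
          linarith
    have hPlenR : (P.length : ℝ) ≤ (6*lam+2) * (D:ℝ) + lam := by
      have h1 : (P.length:ℝ) = (g1.length:ℝ) + ((M.length:ℝ) + (g2.length:ℝ)) := by
        rw [hPlen]; push_cast; ring
      have e2 : (6*lam+2)*(D:ℝ) + lam = lam*(6*(D:ℝ)) + lam + 2*(D:ℝ) := by ring
      rw [h1, e2]
      linarith
    have hDfin : (D:ℝ) ≤ 4*(2*δ+1)*((Nat.log 2 P.length : ℝ)+1)+1 := by
      have hL0 : (0:ℝ) ≤ (Nat.log 2 P.length : ℝ) := Nat.cast_nonneg _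
      have e3 : 4*(2*δ+1)*((Nat.log 2 P.length : ℝ)+1)+1
          = 2*(4*δ*((Nat.log 2 P.length : ℝ)+1)+1) + (4*(Nat.log 2 P.length : ℝ)+3) := by ring
      rw [hB, hNN] at hDB
      push_cast at hDB
      rw [e3]
      linarith
    exact hD0 D P.length hDfin hPlenR
  intro t ht
  obtain ⟨k, hk, he⟩ := hFex t
  refine ⟨k, by omega, ?_⟩
  have h1 : F t ≤ D := hFle t ht
  have h2n : wdist a (c t) (q k) ≤ D := by omega
  have h2 : (wdist a (c t) (q k) : ℝ) ≤ (D:ℝ) := by exact_mod_cast h2n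
  show (wdist a (c t) (q k) : ℝ) ≤ D0R
  linarith

end LQCAux

open LQCAux in
set_option maxHeartbeats 1000000 in
/-- If `L` consists of `λ`-quasigeodesic words and surjects onto the hyperbolic group `G`,
then every subgroup `H` that is quasiconvex as a subset of the Cayley graph is
`L`-quasiconvex. -/
theorem L_quasiconvex_of_quasiconvex_subset
    {A G : Type} [Fintype A] [Group G] (a : A → G)
    (hinv : ∀ x : A, ∃ y : A, a y = (a x)⁻¹)
    (hgen : ∀ g : G, ∃ w : List A, evalWord a w = g)
    (δ : ℝ) (hδ : 0 ≤ δ) (hhyp : FourPointHyperbolic a δ)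
    (L : Language A) (hsur : ∀ g : G, ∃ w ∈ L, evalWord a w = g)
    (lam : ℝ) (hlam : 1 ≤ lam)
    (hquasi : ∀ w ∈ L, ∀ i j : ℕ, i ≤ j → j ≤ w.length →
      ((j : ℝ) - i) ≤ lam * wdist a (evalWord a (w.take i)) (evalWord a (w.take j)) + lam)
    (H : Subgroup G)
    (hqc : ∃ ε : ℝ, 0 < ε ∧ ∀ h : G, h ∈ H → ∀ w : List A, evalWord a w = h →
      w.length = wlen a h → ∀ p : List A, p <+: w →
        ∃ u : List A, (u.length : ℝ) ≤ ε ∧ evalWord a p * evalWord a u ∈ H) :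
    ∃ K : ℕ, 0 < K ∧ ∀ w ∈ L, evalWord a w ∈ H → ∀ p : List A, p <+: w →
      ∃ u : List A, u.length ≤ K ∧ evalWord a (p ++ u) ∈ H := by
  classical
  have commR : ∀ x y : G, (wdist a x y : ℝ) = wdist a y x := by
    intro x y; exact_mod_cast wdist_comm a hinv hgen x y
  have tri : ∀ x y z : G, (wdist a x z : ℝ) ≤ wdist a x y + wdist a y z := by
    intro x y z; exact_mod_cast wdist_triangle a hgen x y z
  obtain ⟨ε, hε, hqcm⟩ := hqc
  obtain ⟨D0R, hD0R0, hD0⟩ := unif_bound (2*δ+1) (6*lam+2) lam (by linarith) (by linarith)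
    (by linarith)
  set MB : ℝ := lam*(2*D0R+1) + lam + D0R with hMB
  have hMB0 : 0 ≤ MB := by nlinarith
  set KR : ℝ := MB + ε with hKR
  refine ⟨max 1 ⌈KR⌉₊, lt_of_lt_of_le one_pos (le_max_left _ _), ?_⟩
  intro w hwL hwH p hp
  have hin : p.length ≤ w.length := hp.length_le
  have hpw : p = w.take p.length := List.prefix_iff_eq_take.mp hp
  obtain ⟨v, hvval, hvlen⟩ := wlen_spec a hgen (evalWord a w)
  have hstep1 := stepI a hinv hgen hδ hhyp hlam w (hquasi w hwL) v hvval hvlen D0R hD0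
  set i := p.length with hi
  -- Step II: some chain point of the geodesic v is within MB of the prefix point
  have hstep2 : ∃ t, t ≤ v.length ∧
      (wdist a (evalWord a (w.take i)) (evalWord a (v.take t)) : ℝ) ≤ MB := by
    by_cases hv0 : v.length = 0
    · refine ⟨0, Nat.zero_le _, ?_⟩
      have hve : v = [] := List.length_eq_zero_iff.mp hv0
      have hh1 : evalWord a w = 1 := by rw [← hvval, hve, evalWord_nil]
      have hq0 : evalWord a (w.take 0) = 1 := by simp [evalWord_nil]
      have hqn : evalWord a (w.take w.length) = 1 := by rw [List.take_length]; exact hh1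
      have h1 := hquasi w hwL 0 w.length (Nat.zero_le _) (le_refl _)
      rw [hq0, hqn, wdist_self] at h1
      have h2 : wdist a (evalWord a (w.take i)) 1 ≤ i := by
        rw [wdist_comm a hinv hgen, wdist_one_left]
        calc wlen a _ ≤ (w.take i).length := wlen_le a rfl
          _ ≤ i := List.length_take_le _ _
      have hc0 : evalWord a (v.take 0) = 1 := by simp [evalWord_nil]
      rw [hc0]
      have h3 : (wdist a (evalWord a (w.take i)) 1 : ℝ) ≤ (i:ℝ) := by exact_mod_cast h2
      have h4 : (i:ℝ) ≤ (w.length:ℝ) := by exact_mod_cast hin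
      push_cast at h1
      nlinarith
    · have hkf : ∀ t, ∃ kk, t ≤ v.length → (kk ≤ w.length ∧
          (wdist a (evalWord a (v.take t)) (evalWord a (w.take kk)) : ℝ) ≤ D0R ∧
          (t = 0 → kk = 0) ∧ (t = v.length → kk = w.length)) := by
        intro t
        by_cases htv : t ≤ v.length
        · by_cases ht0 : t = 0
          · refine ⟨0, fun _ => ⟨Nat.zero_le _, ?_, fun _ => rfl, fun hc => by omega⟩⟩
            rw [ht0]
            simp only [List.take_zero, evalWord_nil, wdist_self]
            simpa using hD0R0
          · by_cases htL : t = v.length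
            · refine ⟨w.length, fun _ => ⟨le_refl _, ?_, fun hc => by omega, fun _ => rfl⟩⟩
              rw [htL, List.take_length, List.take_length, hvval, wdist_self]
              simpa using hD0R0
            · obtain ⟨k, hk, hd⟩ := hstep1 t htv
              exact ⟨k, fun _ => ⟨hk, hd, fun hc => absurd hc ht0, fun hc => absurd hc htL⟩⟩
        · exact ⟨0, fun hc => absurd hc htv⟩
      choose kf hkf using hkf
      set S := (Finset.range (v.length+1)).filter (fun t => kf t ≤ i) with hS
      have h0S : (0:ℕ) ∈ S := by
        rw [hS, Finset.mem_filter]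
        refine ⟨by simp, ?_⟩
        have := (hkf 0 (Nat.zero_le _)).2.2.1 rfl
        omega
      have hSne : S.Nonempty := ⟨0, h0S⟩
      set tb := S.max' hSne with htb
      have htbS : tb ∈ S := S.max'_mem hSne
      have htbv : tb ≤ v.length := by
        have := (Finset.mem_filter.mp htbS).1
        have := Finset.mem_range.mp this
        omega
      have htbi : kf tb ≤ i := (Finset.mem_filter.mp htbS).2
      by_cases htbL : tb = v.length
      · have h1 := (hkf tb htbv).2.2.2 htbL
        have hiN : i = w.length := by omega
        refine ⟨v.length, le_refl _, ?_⟩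
        have hceq : evalWord a (v.take v.length) = evalWord a (w.take i) := by
          rw [List.take_length, hvval, hiN, List.take_length]
        rw [hceq, wdist_self]
        simpa using hMB0
      · have htb1v : tb + 1 ≤ v.length := by omega
        have htb1S : tb + 1 ∉ S := by
          intro hmem
          have := S.le_max' _ hmem
          omega
        have hk2i : i < kf (tb+1) := by
          by_contra hcon
          push_neg at hcon
          exact htb1S (Finset.mem_filter.mpr ⟨Finset.mem_range.mpr (by omega), hcon⟩)
        obtain ⟨hkn1, hkd1, -, -⟩ := hkf tb htbv
        obtain ⟨hkn2, hkd2, -, -⟩ := hkf (tb+1) htb1v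
        have hcc : (wdist a (evalWord a (v.take tb)) (evalWord a (v.take (tb+1))) : ℝ) ≤ 1 := by
          have h5 := wdist_take_le a v (Nat.le_succ tb) htb1v
          have h6 := le_trans h5 (by omega : tb + 1 - tb ≤ 1)
          exact_mod_cast h6
        have hstepd : (wdist a (evalWord a (w.take (kf tb))) (evalWord a (w.take (kf (tb+1)))) : ℝ)
            ≤ 2*D0R + 1 := by
          have t1 := tri (evalWord a (w.take (kf tb))) (evalWord a (v.take tb))
            (evalWord a (w.take (kf (tb+1))))
          have t2 := tri (evalWord a (v.take tb)) (evalWord a (v.take (tb+1)))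
            (evalWord a (w.take (kf (tb+1))))
          have c1 := commR (evalWord a (v.take tb)) (evalWord a (w.take (kf tb)))
          linarith
        have hquas := hquasi w hwL (kf tb) (kf (tb+1)) (by omega) hkn2
        have hitb : (i:ℝ) - kf tb ≤ lam*(2*D0R+1) + lam := by
          have hcast : (i:ℝ) ≤ (kf (tb+1) : ℝ) := by exact_mod_cast le_of_lt hk2i
          have hmul : lam * (wdist a (evalWord a (w.take (kf tb)))
              (evalWord a (w.take (kf (tb+1)))) : ℝ) ≤ lam * (2*D0R+1) :=
            mul_le_mul_of_nonneg_left hstepd (by linarith)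
          linarith
        refine ⟨tb, htbv, ?_⟩
        have hqi : (wdist a (evalWord a (w.take i)) (evalWord a (w.take (kf tb))) : ℝ)
            ≤ (i:ℝ) - kf tb := by
          have h5 := wdist_take_le a w htbi hin
          have h6 := commR (evalWord a (w.take (kf tb))) (evalWord a (w.take i))
          have h7 : (wdist a (evalWord a (w.take (kf tb))) (evalWord a (w.take i)) : ℝ)
              ≤ ((i - kf tb : ℕ) : ℝ) := by exact_mod_cast h5
          have h8 : ((i - kf tb : ℕ) : ℝ) = (i:ℝ) - kf tb := by
            push_cast [Nat.cast_sub htbi]; ring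
          linarith
        have t1 := tri (evalWord a (w.take i)) (evalWord a (w.take (kf tb)))
          (evalWord a (v.take tb))
        have c1 := commR (evalWord a (v.take tb)) (evalWord a (w.take (kf tb)))
        rw [hMB]
        linarith
  obtain ⟨t, htv, htd⟩ := hstep2
  obtain ⟨u', hu'len, hu'H⟩ := hqcm (evalWord a w) hwH v hvval hvlen (v.take t)
    (List.take_prefix t v)
  set e := (evalWord a (w.take i))⁻¹ * (evalWord a (v.take t) * evalWord a u') with he
  obtain ⟨u, huval, hulen⟩ := wlen_spec a hgen e
  refine ⟨u, ?_, ?_⟩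
  · have h1 : wlen a e ≤ wdist a (evalWord a (w.take i)) (evalWord a (v.take t))
        + wlen a (evalWord a u') := by
      have h2 := wlen_mul_le a hgen ((evalWord a (w.take i))⁻¹ * evalWord a (v.take t))
        (evalWord a u')
      have h3 : e = ((evalWord a (w.take i))⁻¹ * evalWord a (v.take t)) * evalWord a u' := by
        rw [he]; group
      rw [h3]
      exact h2
    have h4 : (wlen a (evalWord a u') : ℝ) ≤ ε := by
      calc (wlen a (evalWord a u') : ℝ) ≤ (u'.length : ℝ) := by
            exact_mod_cast wlen_le a rfl
        _ ≤ ε := hu'len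
    have h5 : (u.length : ℝ) ≤ KR := by
      rw [hulen, hKR]
      have h6 : (wlen a e : ℝ) ≤ (wdist a (evalWord a (w.take i)) (evalWord a (v.take t)) : ℝ)
          + (wlen a (evalWord a u') : ℝ) := by exact_mod_cast h1
      linarith
    have h7 : u.length ≤ ⌈KR⌉₊ := by
      have h8 : (u.length : ℝ) ≤ (⌈KR⌉₊ : ℝ) := le_trans h5 (Nat.le_ceil KR)
      exact_mod_cast h8
    exact le_trans h7 (le_max_right _ _)
  · rw [evalWord_append]
    have hpe : evalWord a p = evalWord a (w.take i) := by rw [← hpw]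
    rw [hpe, huval, he]
    have hgrp : evalWord a (w.take i) * ((evalWord a (w.take i))⁻¹ *
        (evalWord a (v.take t) * evalWord a u')) = evalWord a (v.take t) * evalWord a u' := by
      group
    rw [hgrp]
    exact hu'H
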